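/- Let n ≥ 1, let a : ℝⁿ → ℂ be a Schwartz function, and let w ∈ ℝⁿ. Then lim_{t→0⁺} (2πt)^{-n/2}·e^{-iπn/4}·∫_{ℝⁿ} exp(i‖z−w‖²/(2t))·a(z) dz = a(w). -/

import Mathlib

open Complex MeasureTheory Filter
open FourierTransform
open scoped RealInnerProductSpace Real

/-- Generic dominated-convergence lemma for oscillatory integrals against an integrable
continuous function. -/
lemma stmt1_aux_tendsto {V : Type*} [NormedAddCommGroup V] [InnerProductSpace ℝ V]
    [MeasurableSpace V] [BorelSpace V] {μ : Measure V}
    (g : V → ℂ) (hgi : Integrable g μ) (hgc : Continuous g)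
    (u : V → ℂ) (huc : Continuous u) (hun : ∀ ξ, ‖u ξ‖ ≤ 1)
    (φ : V → ℝ) (hφc : Continuous φ) (hφ : ∀ ξ, 0 ≤ φ ξ)
    {α : Type*} {F : Filter α} [F.IsCountablyGenerated]
    {c : α → ℂ} {c₀ : ℂ} (hc : Tendsto c F (nhds c₀)) (hre : ∀ᶠ x in F, (c x).re ≤ 0) :
    Tendsto (fun x => ∫ ξ, u ξ * (Complex.exp (c x * ((φ ξ : ℝ) : ℂ)) * g ξ) ∂μ) F
      (nhds (∫ ξ, u ξ * (Complex.exp (c₀ * ((φ ξ : ℝ) : ℂ)) * g ξ) ∂μ)) := by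
  apply tendsto_integral_filter_of_dominated_convergence (fun ξ => ‖g ξ‖)
  · apply Eventually.of_forall; intro x
    exact (huc.mul ((Complex.continuous_exp.comp
      (continuous_const.mul (Complex.continuous_ofReal.comp hφc))).mul hgc)).aestronglyMeasurable
  · filter_upwards [hre] with x hx
    apply Eventually.of_forall; intro ξ
    rw [norm_mul, norm_mul]
    have h1 : ‖Complex.exp (c x * ((φ ξ : ℝ) : ℂ))‖ ≤ 1 := by
      rw [Complex.norm_exp, Real.exp_le_one_iff]
      have : (c x * ((φ ξ : ℝ) : ℂ)).re = (c x).re * φ ξ := by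
        simp [Complex.mul_re]
      rw [this]
      exact mul_nonpos_of_nonpos_of_nonneg hx (hφ ξ)
    calc ‖u ξ‖ * (‖Complex.exp (c x * ((φ ξ : ℝ) : ℂ))‖ * ‖g ξ‖)
        ≤ 1 * (1 * ‖g ξ‖) := by
          apply mul_le_mul (hun ξ) _ (by positivity) zero_le_one
          exact mul_le_mul h1 le_rfl (norm_nonneg _) zero_le_one
      _ = ‖g ξ‖ := by ring
  · exact hgi.norm
  · apply Eventually.of_forall; intro ξ
    exact tendsto_const_nhds.mul
      (((Complex.continuous_exp.tendsto _).comp (hc.mul_const _)).mul tendsto_const_nhds)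

/-- Parseval-type identity for the Gaussian with complex parameter `b` (with `0 < re b`)
against a Schwartz function. -/
lemma stmt1_parseval (n : ℕ) (a : SchwartzMap (EuclideanSpace ℝ (Fin n)) ℂ)
    (w : EuclideanSpace ℝ (Fin n)) {b : ℂ} (hb : 0 < b.re) :
    ∫ z : EuclideanSpace ℝ (Fin n), Complex.exp ((-b) * ((‖z - w‖ ^ 2 : ℝ) : ℂ)) * a z
      = ((π : ℂ) / b) ^ ((n : ℂ) / 2) *
        ∫ ξ : EuclideanSpace ℝ (Fin n),
          (𝐞 (-⟪ξ, w⟫) : ℂ) *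
            (Complex.exp ((-b⁻¹) * ((π ^ 2 * ‖ξ‖ ^ 2 : ℝ) : ℂ)) *
              ((FourierTransform.fourierCLE ℂ (SchwartzMap (EuclideanSpace ℝ (Fin n)) ℂ)).symm a) ξ) := by
  set g := (FourierTransform.fourierCLE ℂ (SchwartzMap (EuclideanSpace ℝ (Fin n)) ℂ)).symm a with hg
  have hga : 𝓕 ⇑g = ⇑a := by
    rw [← SchwartzMap.fourier_coe, ← SchwartzMap.fourierTransformCLE_apply (R := ℂ), hg,
      (FourierTransform.fourierCLE ℂ (SchwartzMap (EuclideanSpace ℝ (Fin n)) ℂ)).apply_symm_apply a]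
  set f : EuclideanSpace ℝ (Fin n) → ℂ :=
    fun z => Complex.exp ((-b) * ((‖z - w‖ ^ 2 : ℝ) : ℂ)) with hf
  have hbne : b ≠ 0 := fun h => by simp [h] at hb
  have hf_int : Integrable f := by
    have h0 := GaussianFourier.integrable_cexp_neg_mul_sq_norm_add
      (V := EuclideanSpace ℝ (Fin n)) hb (2 * b) w
    have h1 := h0.const_mul (Complex.exp (-b * (‖w‖ : ℂ) ^ 2))
    refine h1.congr (Filter.Eventually.of_forall fun z => ?_)
    show Complex.exp (-b * (‖w‖ : ℂ) ^ 2) * Complex.exp (-b * (‖z‖ : ℂ) ^ 2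
        + 2 * b * ((⟪w, z⟫ : ℝ) : ℂ)) = Complex.exp ((-b) * ((‖z - w‖ ^ 2 : ℝ) : ℂ))
    rw [← Complex.exp_add]
    congr 1
    have key : ((‖z - w‖ ^ 2 : ℝ) : ℂ)
        = (‖z‖ : ℂ) ^ 2 - 2 * (⟪z, w⟫ : ℂ) + (‖w‖ : ℂ) ^ 2 := by
      push_cast [norm_sub_sq_real]; ring
    rw [key, real_inner_comm z w]
    ring
  have hflip : (innerₗ (EuclideanSpace ℝ (Fin n))).flip = innerₗ (EuclideanSpace ℝ (Fin n)) := by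
    ext v u
    simp only [LinearMap.flip_apply, innerₗ_apply_apply]
    exact real_inner_comm v u
  have hP := VectorFourier.integral_fourierIntegral_smul_eq_flip
    (e := Real.fourierChar) (L := innerₗ (EuclideanSpace ℝ (Fin n)))
    (μ := (volume : Measure (EuclideanSpace ℝ (Fin n))))
    (ν := (volume : Measure (EuclideanSpace ℝ (Fin n))))
    Real.continuous_fourierChar continuous_inner hf_int g.integrable
  rw [hflip] at hP
  have hFf : ∀ ξ : EuclideanSpace ℝ (Fin n),
      VectorFourier.fourierIntegral Real.fourierChar volume
        (innerₗ (EuclideanSpace ℝ (Fin n))) f ξ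
      = (𝐞 (-⟪ξ, w⟫) : ℂ) * (((π : ℂ) / b) ^ ((n : ℂ) / 2)
          * Complex.exp ((-b⁻¹) * ((π ^ 2 * ‖ξ‖ ^ 2 : ℝ) : ℂ))) := by
    intro ξ
    have h2 : f = (fun v : EuclideanSpace ℝ (Fin n) => Complex.exp (-b * (‖v‖ : ℂ) ^ 2))
        ∘ (fun v => v + (-w)) := by
      funext v
      simp only [Function.comp_apply, hf, ← sub_eq_add_neg]
      push_cast
      ring_nf
    have h3 : VectorFourier.fourierIntegral Real.fourierChar volume
        (innerₗ (EuclideanSpace ℝ (Fin n)))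
        (fun v : EuclideanSpace ℝ (Fin n) => Complex.exp (-b * (‖v‖ : ℂ) ^ 2)) ξ
        = ((π : ℂ) / b) ^ ((n : ℂ) / 2)
            * Complex.exp ((-b⁻¹) * ((π ^ 2 * ‖ξ‖ ^ 2 : ℝ) : ℂ)) := by
      have h4 := fourier_gaussian_innerProductSpace (V := EuclideanSpace ℝ (Fin n)) hb ξ
      have h5 : 𝓕 (fun v : EuclideanSpace ℝ (Fin n) => Complex.exp (-b * (‖v‖ : ℂ) ^ 2)) ξ
          = VectorFourier.fourierIntegral Real.fourierChar volume
            (innerₗ (EuclideanSpace ℝ (Fin n)))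
            (fun v : EuclideanSpace ℝ (Fin n) => Complex.exp (-b * (‖v‖ : ℂ) ^ 2)) ξ := rfl
      rw [h5] at h4
      rw [h4, finrank_euclideanSpace_fin]
      congr 1
      push_cast
      ring
    have h7 : ((innerₗ (EuclideanSpace ℝ (Fin n))) (-w)) ξ = -⟪ξ, w⟫ := by
      simp only [innerₗ_apply_apply, inner_neg_left]
      rw [real_inner_comm]
    rw [h2, VectorFourier.fourierIntegral_comp_add_right]
    beta_reduce
    rw [h7, h3, Circle.smul_def, smul_eq_mul]
  have hL : (∫ ξ : EuclideanSpace ℝ (Fin n),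
      (VectorFourier.fourierIntegral Real.fourierChar volume
        (innerₗ (EuclideanSpace ℝ (Fin n))) f ξ) • g ξ)
      = ((π : ℂ) / b) ^ ((n : ℂ) / 2) *
        ∫ ξ : EuclideanSpace ℝ (Fin n), (𝐞 (-⟪ξ, w⟫) : ℂ) *
          (Complex.exp ((-b⁻¹) * ((π ^ 2 * ‖ξ‖ ^ 2 : ℝ) : ℂ)) * g ξ) := by
    rw [← integral_const_mul]
    congr 1
    funext ξ
    rw [hFf ξ, smul_eq_mul]
    ring
  have hR : (∫ z : EuclideanSpace ℝ (Fin n), f z • (VectorFourier.fourierIntegral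
      Real.fourierChar volume (innerₗ (EuclideanSpace ℝ (Fin n))) (⇑g) z))
      = ∫ z : EuclideanSpace ℝ (Fin n), Complex.exp ((-b) * ((‖z - w‖ ^ 2 : ℝ) : ℂ)) * a z := by
    congr 1
    funext z
    have h6 : VectorFourier.fourierIntegral Real.fourierChar volume
        (innerₗ (EuclideanSpace ℝ (Fin n))) (⇑g) z = 𝓕 ⇑g z := rfl
    rw [smul_eq_mul, h6, hga]
  rw [← hR, ← hP, hL]

lemma stmt1_base {t : ℝ} (ht : 0 < t) :
    (π : ℂ) / ((-Complex.I) / (2 * (t : ℂ))) = ((2 * π * t : ℝ) : ℂ) * Complex.I := by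
  have h2t : (2 * (t : ℂ)) ≠ 0 := by
    simp [Complex.ofReal_ne_zero, ht.ne']
  rw [div_div_eq_mul_div, div_eq_iff (neg_ne_zero.mpr Complex.I_ne_zero)]
  push_cast
  ring_nf
  rw [Complex.I_sq]
  ring

lemma stmt1_prefactor (n : ℕ) {t : ℝ} (ht : 0 < t) :
    (((2 * π * t) ^ (-(n : ℝ) / 2) : ℝ) : ℂ) * Complex.exp (-Complex.I * π * n / 4)
      * (((2 * π * t : ℝ) : ℂ) * Complex.I) ^ ((n : ℂ) / 2) = 1 := by
  have hr : (0 : ℝ) < 2 * π * t := by positivity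
  have h1 : ‖((2 * π * t : ℝ) : ℂ) * Complex.I‖ = 2 * π * t := by
    simp [abs_of_pos Real.pi_pos, abs_of_pos ht]
  have h2 : Complex.arg (((2 * π * t : ℝ) : ℂ) * Complex.I) = π / 2 := by
    rw [Complex.arg_real_mul _ hr, Complex.arg_I]
  have hne : (((2 * π * t : ℝ) : ℂ) * Complex.I) ≠ 0 :=
    mul_ne_zero (by exact_mod_cast hr.ne') Complex.I_ne_zero
  have hlog : Complex.log (((2 * π * t : ℝ) : ℂ) * Complex.I)
      = (Real.log (2 * π * t) : ℂ) + ((π / 2 : ℝ) : ℂ) * Complex.I := by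
    rw [Complex.log, h1, h2]
  have hpow : (((2 * π * t : ℝ) : ℂ) * Complex.I) ^ ((n : ℂ) / 2)
      = Complex.exp (((n : ℂ) / 2) * ((Real.log (2 * π * t) : ℂ)
          + ((π / 2 : ℝ) : ℂ) * Complex.I)) := by
    rw [Complex.cpow_def_of_ne_zero hne, hlog, mul_comm]
  have hrpow : (((2 * π * t) ^ (-(n : ℝ) / 2) : ℝ) : ℂ)
      = Complex.exp (((Real.log (2 * π * t) * (-(n : ℝ) / 2) : ℝ) : ℂ)) := by
    rw [Real.rpow_def_of_pos hr, Complex.ofReal_exp]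
  rw [hpow, hrpow, ← Complex.exp_add, ← Complex.exp_add, ← Complex.exp_zero]
  congr 1
  push_cast
  ring

/-- Stationary phase / initial-condition verification for the Schrödinger parametrix:
for a Schwartz function `a`,
`(2πt)^{-n/2} e^{-iπn/4} ∫ e^{i‖z−w‖²/(2t)} a(z) dz → a(w)` as `t → 0⁺`. -/
theorem stmt1 (n : ℕ) (hn : 1 ≤ n) (a : SchwartzMap (EuclideanSpace ℝ (Fin n)) ℂ)
    (w : EuclideanSpace ℝ (Fin n)) :
    Tendsto
      (fun t : ℝ =>
        (((2 * Real.pi * t) ^ (-(n : ℝ) / 2) : ℝ) : ℂ)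
          * Complex.exp (-Complex.I * Real.pi * n / 4)
          * ∫ z : EuclideanSpace ℝ (Fin n),
              Complex.exp (Complex.I * ((‖z - w‖ ^ 2 : ℝ) : ℂ) / (2 * (t : ℂ))) * a z)
      (nhdsWithin 0 (Set.Ioi 0)) (nhds (a w)) := by
  classical
  set g := (FourierTransform.fourierCLE ℂ (SchwartzMap (EuclideanSpace ℝ (Fin n)) ℂ)).symm a with hg
  have hga : 𝓕 ⇑g = ⇑a := by
    rw [← SchwartzMap.fourier_coe, ← SchwartzMap.fourierTransformCLE_apply (R := ℂ), hg,
      (FourierTransform.fourierCLE ℂ (SchwartzMap (EuclideanSpace ℝ (Fin n)) ℂ)).apply_symm_apply a]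
  set u : EuclideanSpace ℝ (Fin n) → ℂ := fun ξ => (𝐞 (-⟪ξ, w⟫) : ℂ) with hu
  set φ : EuclideanSpace ℝ (Fin n) → ℝ := fun ξ => π ^ 2 * ‖ξ‖ ^ 2 with hφ
  have huc : Continuous u := by
    apply continuous_induced_dom.comp
    exact Real.continuous_fourierChar.comp ((continuous_id.inner continuous_const).neg)
  have hun : ∀ ξ, ‖u ξ‖ ≤ 1 := fun ξ => by
    rw [hu]
    simp [Circle.norm_coe]
  have hφc : Continuous φ := by
    apply continuous_const.mul
    exact (continuous_norm.pow 2)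
  have hφ0 : ∀ ξ, 0 ≤ φ ξ := fun ξ => by rw [hφ]; positivity
  -- the function after the Parseval transformation
  set S : ℝ → ℂ := fun s => ∫ ξ : EuclideanSpace ℝ (Fin n),
      u ξ * (Complex.exp ((-(((2 * s : ℝ) : ℂ) * Complex.I)) * ((φ ξ : ℝ) : ℂ)) * g ξ) with hS
  -- Step A: identity for positive t
  have key : ∀ t : ℝ, 0 < t →
      (((2 * π * t) ^ (-(n : ℝ) / 2) : ℝ) : ℂ) * Complex.exp (-Complex.I * π * n / 4)
        * (∫ z : EuclideanSpace ℝ (Fin n),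
            Complex.exp (Complex.I * ((‖z - w‖ ^ 2 : ℝ) : ℂ) / (2 * (t : ℂ))) * a z)
        = S t := by
    intro t ht
    have h2t : (2 * (t : ℂ)) ≠ 0 := by simp [Complex.ofReal_ne_zero, ht.ne']
    set b : ℝ → ℂ := fun ε => ((ε / (2 * t) : ℝ) : ℂ) - ((1 / (2 * t) : ℝ) : ℂ) * Complex.I
      with hb
    have hb0 : b 0 = (-Complex.I) / (2 * (t : ℂ)) := by
      rw [hb]
      push_cast
      field_simp
      ring
    have hbre : ∀ ε : ℝ, (b ε).re = ε / (2 * t) := by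
      intro ε
      simp only [hb, Complex.sub_re, Complex.ofReal_re, Complex.mul_re, Complex.I_re,
        Complex.I_im, Complex.ofReal_im]
      ring
    have hbc : Continuous b := by
      apply Continuous.sub
      · exact Complex.continuous_ofReal.comp (continuous_id.div_const _)
      · exact continuous_const
    have hbne0 : b 0 ≠ 0 := by
      rw [hb0]
      simp [div_eq_zero_iff, Complex.I_ne_zero, h2t]
    -- limit of the left-hand sides
    have hLlim : Tendsto (fun ε : ℝ => ∫ z : EuclideanSpace ℝ (Fin n),
        Complex.exp ((-(b ε)) * ((‖z - w‖ ^ 2 : ℝ) : ℂ)) * a z)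
        (nhdsWithin 0 (Set.Ioi 0))
        (nhds (∫ z : EuclideanSpace ℝ (Fin n),
          Complex.exp ((-(b 0)) * ((‖z - w‖ ^ 2 : ℝ) : ℂ)) * a z)) := by
      have h := stmt1_aux_tendsto (μ := (volume : Measure (EuclideanSpace ℝ (Fin n))))
        (⇑a) a.integrable a.continuous (fun _ => (1 : ℂ)) continuous_const
        (fun ξ => by norm_num) (fun z => ‖z - w‖ ^ 2)
        ((continuous_id.sub continuous_const).norm.pow 2) (fun z => by positivity)
        (c := fun ε => -(b ε)) (c₀ := -(b 0))
        ((hbc.tendsto 0).neg.mono_left nhdsWithin_le_nhds)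
        (by
          filter_upwards [self_mem_nhdsWithin] with ε hε
          rw [Complex.neg_re, hbre]
          have : (0:ℝ) < ε := hε
          exact neg_nonpos.mpr (by positivity))
      simp only [one_mul] at h ⊢
      exact h
    -- limit of the right-hand sides
    have hRlim : Tendsto (fun ε : ℝ =>
        ((π : ℂ) / b ε) ^ ((n : ℂ) / 2) *
          ∫ ξ : EuclideanSpace ℝ (Fin n),
            u ξ * (Complex.exp ((-(b ε)⁻¹) * ((φ ξ : ℝ) : ℂ)) * g ξ))
        (nhdsWithin 0 (Set.Ioi 0))
        (nhds (((π : ℂ) / b 0) ^ ((n : ℂ) / 2) *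
          ∫ ξ : EuclideanSpace ℝ (Fin n),
            u ξ * (Complex.exp ((-(b 0)⁻¹) * ((φ ξ : ℝ) : ℂ)) * g ξ))) := by
      apply Tendsto.mul
      · have hbase : Tendsto (fun ε : ℝ => (π : ℂ) / b ε) (nhdsWithin 0 (Set.Ioi 0))
            (nhds ((π : ℂ) / b 0)) :=
          (tendsto_const_nhds.div (hbc.tendsto 0) hbne0).mono_left nhdsWithin_le_nhds
        have hmem : (π : ℂ) / b 0 ∈ Complex.slitPlane := by
          rw [hb0, stmt1_base ht]
          apply Complex.mem_slitPlane_iff.mpr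
          right
          simp only [Complex.mul_im, Complex.ofReal_re, Complex.I_im, Complex.ofReal_im,
            Complex.I_re, mul_one, mul_zero, add_zero]
          positivity
        exact (continuousAt_cpow_const hmem).tendsto.comp hbase
      · apply stmt1_aux_tendsto (μ := (volume : Measure (EuclideanSpace ℝ (Fin n))))
          (⇑g) g.integrable g.continuous u huc hun φ hφc hφ0
          (((hbc.tendsto 0).inv₀ hbne0).neg.mono_left nhdsWithin_le_nhds)
        filter_upwards [self_mem_nhdsWithin] with ε hε
        rw [Complex.neg_re, Complex.inv_re, hbre]
        have h1 : (0:ℝ) < ε := hε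
        have h2 : 0 ≤ Complex.normSq (b ε) := Complex.normSq_nonneg _
        exact neg_nonpos.mpr (div_nonneg (by positivity) h2)
    -- the two функции agree for ε > 0
    have heq : ∀ᶠ ε in nhdsWithin (0:ℝ) (Set.Ioi 0),
        (fun ε : ℝ => ∫ z : EuclideanSpace ℝ (Fin n),
          Complex.exp ((-(b ε)) * ((‖z - w‖ ^ 2 : ℝ) : ℂ)) * a z) ε
        = (fun ε : ℝ => ((π : ℂ) / b ε) ^ ((n : ℂ) / 2) *
            ∫ ξ : EuclideanSpace ℝ (Fin n),
              u ξ * (Complex.exp ((-(b ε)⁻¹) * ((φ ξ : ℝ) : ℂ)) * g ξ)) ε := by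
      filter_upwards [self_mem_nhdsWithin] with ε hε
      have h1 : (0:ℝ) < ε := hε
      have hbpos : 0 < (b ε).re := by rw [hbre]; positivity
      exact stmt1_parseval n a w hbpos
    have hunique : (∫ z : EuclideanSpace ℝ (Fin n),
          Complex.exp ((-(b 0)) * ((‖z - w‖ ^ 2 : ℝ) : ℂ)) * a z)
        = ((π : ℂ) / b 0) ^ ((n : ℂ) / 2) *
          ∫ ξ : EuclideanSpace ℝ (Fin n),
            u ξ * (Complex.exp ((-(b 0)⁻¹) * ((φ ξ : ℝ) : ℂ)) * g ξ) :=
      tendsto_nhds_unique (hLlim.congr' heq) hRlim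
    -- now rewrite everything at t
    have hinv : -(b 0)⁻¹ = -(((2 * t : ℝ) : ℂ) * Complex.I) := by
      rw [hb0, inv_div, div_neg, Complex.div_I]
      push_cast
      ring
    have hexp0 : ∀ z : EuclideanSpace ℝ (Fin n),
        Complex.I * ((‖z - w‖ ^ 2 : ℝ) : ℂ) / (2 * (t : ℂ))
          = (-(b 0)) * ((‖z - w‖ ^ 2 : ℝ) : ℂ) := by
      intro z
      rw [hb0]
      field_simp
    calc (((2 * π * t) ^ (-(n : ℝ) / 2) : ℝ) : ℂ) * Complex.exp (-Complex.I * π * n / 4)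
        * (∫ z : EuclideanSpace ℝ (Fin n),
            Complex.exp (Complex.I * ((‖z - w‖ ^ 2 : ℝ) : ℂ) / (2 * (t : ℂ))) * a z)
        = (((2 * π * t) ^ (-(n : ℝ) / 2) : ℝ) : ℂ) * Complex.exp (-Complex.I * π * n / 4)
          * (∫ z : EuclideanSpace ℝ (Fin n),
              Complex.exp ((-(b 0)) * ((‖z - w‖ ^ 2 : ℝ) : ℂ)) * a z) := by
          congr 1
          congr 1
          funext z
          rw [hexp0 z]
      _ = (((2 * π * t) ^ (-(n : ℝ) / 2) : ℝ) : ℂ) * Complex.exp (-Complex.I * π * n / 4)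
          * ((((2 * π * t : ℝ) : ℂ) * Complex.I) ^ ((n : ℂ) / 2) * S t) := by
          rw [hunique]
          congr 2
          · rw [hb0, stmt1_base ht]
          · rw [hS]
            congr 1
            funext ξ
            rw [hinv]
      _ = S t := by
          rw [← mul_assoc, stmt1_prefactor n ht, one_mul]
  -- Step B: the limit of S as t → 0⁺
  have hSlim : Tendsto S (nhdsWithin 0 (Set.Ioi 0)) (nhds (a w)) := by
    have h := stmt1_aux_tendsto (μ := (volume : Measure (EuclideanSpace ℝ (Fin n))))
      (⇑g) g.integrable g.continuous u huc hun φ hφc hφ0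
      (c := fun s : ℝ => -(((2 * s : ℝ) : ℂ) * Complex.I)) (c₀ := 0)
      (by
        have hcont : Continuous (fun s : ℝ => -(((2 * s : ℝ) : ℂ) * Complex.I)) := by
          apply Continuous.neg
          exact (Complex.continuous_ofReal.comp (continuous_const.mul continuous_id)).mul
            continuous_const
        have := (hcont.tendsto 0).mono_left
          (nhdsWithin_le_nhds (s := Set.Ioi (0:ℝ)))
        simpa using this)
      (Eventually.of_forall fun s => by simp)
    have hval : (∫ ξ : EuclideanSpace ℝ (Fin n),
        u ξ * (Complex.exp ((0 : ℂ) * ((φ ξ : ℝ) : ℂ)) * g ξ)) = a w := by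
      have h1 : (∫ ξ : EuclideanSpace ℝ (Fin n),
          u ξ * (Complex.exp ((0 : ℂ) * ((φ ξ : ℝ) : ℂ)) * g ξ))
          = ∫ ξ : EuclideanSpace ℝ (Fin n), u ξ * g ξ := by
        congr 1; funext ξ; simp
      rw [h1, ← hga]
      rw [Real.fourier_eq]
      congr 1
    rw [hS]
    rw [hval] at h
    exact h
  exact hSlim.congr' (by
    filter_upwards [self_mem_nhdsWithin] with t ht
    exact (key t ht).symm) |>.mono_left le_rfl
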